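/- Let f_1, ..., f_n : ℝ^d → ℝ be twice continuously differentiable, each ρ-Lipschitz, with Hessians satisfying |⟨v, ∇²f_j(w) v⟩| ≤ β₁‖v‖² for all w, v, j. Suppose the empirical risk F̂ = (1/n)∑_{j=1}^n f_j is (α, γ, τ)-strict saddle, and suppose n > max(ρ/τ, β₁/γ). Fix i ∈ [n] and let ŵ_i be a global minimizer of w ↦ (1/n)∑_{j≠i} f_j(w). Then there exists a global minimizer w̄ of F̂ such that f_i(ŵ_i) − f_i(w̄) ≤ 2ρ²/(α n). -/

import Mathlib

section Helpers

variable {E : Type*} [NormedAddCommGroup E] [NormedSpace ℝ E]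

lemma hasDerivAt_line (F : E → ℝ) (hF : ContDiff ℝ 2 F) (x v : E) (t : ℝ) :
    HasDerivAt (fun s : ℝ => F (x + s • v)) (fderiv ℝ F (x + t • v) v) t := by
  have hl : HasDerivAt (fun s : ℝ => x + s • v) v t := by
    simpa using ((hasDerivAt_id t).smul_const v).const_add x
  exact ((hF.differentiable (by norm_num) (x + t • v)).hasFDerivAt).comp_hasDerivAt t hl

lemma hasDerivAt_line2 (F : E → ℝ) (hF : ContDiff ℝ 2 F) (x v : E) (t : ℝ) :
    HasDerivAt (fun s : ℝ => fderiv ℝ F (x + s • v) v)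
      (iteratedFDeriv ℝ 2 F (x + t • v) ![v, v]) t := by
  have hl : HasDerivAt (fun s : ℝ => x + s • v) v t := by
    simpa using ((hasDerivAt_id t).smul_const v).const_add x
  have hd : HasFDerivAt (fderiv ℝ F) (fderiv ℝ (fderiv ℝ F) (x + t • v)) (x + t • v) :=
    (((hF.fderiv_right (m := 1) (by norm_num)).differentiable (by norm_num)) (x + t • v)).hasFDerivAt
  have happ : HasFDerivAt (fun y => fderiv ℝ F y v)
      (((fderiv ℝ F (x + t • v)).comp (0 : E →L[ℝ] E)) +
        (fderiv ℝ (fderiv ℝ F) (x + t • v)).flip v) (x + t • v) :=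
    hd.clm_apply (hasFDerivAt_const v (x + t • v))
  have := happ.comp_hasDerivAt t hl
  have hval : (((fderiv ℝ F (x + t • v)).comp (0 : E →L[ℝ] E)) +
      (fderiv ℝ (fderiv ℝ F) (x + t • v)).flip v) v
      = iteratedFDeriv ℝ 2 F (x + t • v) ![v, v] := by
    rw [iteratedFDeriv_two_apply]
    simp
  rw [hval] at this
  exact this

lemma deriv2_nonneg_of_isLocalMin {φ φ' : ℝ → ℝ} {c : ℝ}
    (hφ : ∀ t, HasDerivAt φ (φ' t) t) (h2 : HasDerivAt φ' c 0)
    (hmin : IsLocalMin φ 0) : 0 ≤ c := by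
  by_contra hc
  push_neg at hc
  have h0 : φ' 0 = 0 := by
    have := hmin.deriv_eq_zero
    rwa [(hφ 0).deriv] at this
  have hslope : Filter.Tendsto (slope φ' 0) (nhdsWithin 0 {(0:ℝ)}ᶜ) (nhds c) :=
    hasDerivAt_iff_tendsto_slope.mp h2
  have hev : ∀ᶠ t in nhdsWithin (0:ℝ) {(0:ℝ)}ᶜ, slope φ' 0 t < 0 :=
    hslope.eventually_lt_const hc
  have hev' : ∀ᶠ t in nhdsWithin (0:ℝ) (Set.Ioi 0), slope φ' 0 t < 0 :=
    hev.filter_mono (nhdsWithin_mono 0 (fun x hx => ne_of_gt hx))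
  obtain ⟨ε, hε, hball⟩ := Metric.mem_nhdsWithin_iff.mp hev'
  obtain ⟨ε', hε', hball'⟩ := Metric.eventually_nhds_iff_ball.mp hmin
  set t : ℝ := min ε ε' / 2 with htdef
  have ht0 : 0 < t := by positivity
  have htε : t < ε := by
    have : min ε ε' ≤ ε := min_le_left _ _
    simp only [htdef]; linarith
  have htε' : t < ε' := by
    have : min ε ε' ≤ ε' := min_le_right _ _
    simp only [htdef]; linarith
  have hneg : ∀ s ∈ Set.Ioo (0:ℝ) t, φ' s < 0 := by
    intro s hs
    have hmem : s ∈ Metric.ball (0:ℝ) ε ∩ Set.Ioi 0 := by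
      constructor
      · simp only [Metric.mem_ball, Real.dist_eq, sub_zero, abs_of_pos hs.1]
        linarith [hs.2]
      · exact hs.1
    have hsl : slope φ' 0 s < 0 := hball hmem
    rw [slope_def_field, h0, sub_zero, sub_zero] at hsl
    rcases div_neg_iff.mp hsl with ⟨_, h⟩ | ⟨h, _⟩
    · exact absurd hs.1 (not_lt.mpr h.le)
    · exact h
  obtain ⟨ξ, hξ, heq⟩ := exists_hasDerivAt_eq_slope φ φ' ht0
    (fun x _ => (hφ x).continuousAt.continuousWithinAt) (fun x _ => hφ x)
  have hφt : φ 0 ≤ φ t := by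
    apply hball'
    simp only [Metric.mem_ball, Real.dist_eq, sub_zero, abs_of_pos ht0]
    exact htε'
  have : (0:ℝ) ≤ φ' ξ := by
    rw [heq, sub_zero]
    exact div_nonneg (by linarith) ht0.le
  exact absurd (hneg ξ hξ) (not_lt.mpr this)

lemma norm_gradient_eq {E : Type*} [NormedAddCommGroup E] [InnerProductSpace ℝ E]
    [CompleteSpace E] (f : E → ℝ) (x : E) : ‖gradient f x‖ = ‖fderiv ℝ f x‖ :=
  (InnerProductSpace.toDual ℝ E).symm.norm_map (fderiv ℝ f x)

end Helpers



/-- A twice continuously differentiable function `F : ℝ^d → ℝ` is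
`(α, γ, τ)`-strict saddle if every local minimum is a global minimum and at every
point `w` one of the following holds: (1) `‖∇F(w)‖ ≥ τ`; (2) there is a unit
direction of curvature at most `−γ`; (3) `w` is within distance `ν` of a local
minimum `w*` around which `F` is `α`-strongly convex on the `2ν`-ball. -/
def IsStrictSaddle {d : ℕ} (F : EuclideanSpace ℝ (Fin d) → ℝ) (α γ τ : ℝ) : Prop :=
  ContDiff ℝ 2 F ∧
  (∀ w, IsLocalMin F w → ∀ u, F w ≤ F u) ∧
  ∀ w : EuclideanSpace ℝ (Fin d),
    ‖gradient F w‖ ≥ τ ∨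
    (∃ v : EuclideanSpace ℝ (Fin d), ‖v‖ = 1 ∧ iteratedFDeriv ℝ 2 F w ![v, v] ≤ -γ) ∨
    (∃ ν : ℝ, 0 < ν ∧ ∃ wstar : EuclideanSpace ℝ (Fin d), IsLocalMin F wstar ∧
      ‖w - wstar‖ ≤ ν ∧
      ∀ u ∈ Metric.closedBall wstar (2 * ν), ∀ v : EuclideanSpace ℝ (Fin d),
        iteratedFDeriv ℝ 2 F u ![v, v] ≥ α * ‖v‖ ^ 2)

set_option maxHeartbeats 1000000 in
/-- If each `f j` is `C²`, `ρ`-Lipschitz, with Hessian quadratic form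
bounded by `β₁‖v‖²`, the empirical risk `F̂ = (1/n)∑ f j` is `(α, γ, τ)`-strict saddle,
`n > max(ρ/τ, β₁/γ)`, and `ŵᵢ` is a global minimizer of the leave-one-out average,
then there is a global minimizer `w̄` of `F̂` with `fᵢ(ŵᵢ) − fᵢ(w̄) ≤ 2ρ²/(αn)`. -/
theorem stmt_4 {d n : ℕ} (f : Fin n → EuclideanSpace ℝ (Fin d) → ℝ)
    (ρ β₁ α γ τ : ℝ) (hα : 0 < α) (hγ : 0 < γ) (hτ : 0 < τ)
    (hsmooth : ∀ j, ContDiff ℝ 2 (f j))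
    (hlip : ∀ j (u v : EuclideanSpace ℝ (Fin d)), |f j u - f j v| ≤ ρ * ‖u - v‖)
    (hgrad : ∀ j w, ‖gradient (f j) w‖ ≤ ρ)
    (hhess : ∀ j (w v : EuclideanSpace ℝ (Fin d)),
      |iteratedFDeriv ℝ 2 (f j) w ![v, v]| ≤ β₁ * ‖v‖ ^ 2)
    (hsaddle : IsStrictSaddle (fun w => (1 / n : ℝ) * ∑ j, f j w) α γ τ)
    (hn : (n : ℝ) > max (ρ / τ) (β₁ / γ))
    (i : Fin n) (wi : EuclideanSpace ℝ (Fin d))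
    (hmin : ∀ w, (1 / n : ℝ) * ∑ j ∈ Finset.univ.erase i, f j wi ≤
      (1 / n : ℝ) * ∑ j ∈ Finset.univ.erase i, f j w) :
    ∃ wbar : EuclideanSpace ℝ (Fin d),
      (∀ w, (1 / n : ℝ) * ∑ j, f j wbar ≤ (1 / n : ℝ) * ∑ j, f j w) ∧
      f i wi - f i wbar ≤ 2 * ρ ^ 2 / (α * n) := by
  classical
  obtain ⟨hF2, hglob, hcases⟩ := hsaddle
  set Fh : EuclideanSpace ℝ (Fin d) → ℝ := fun w => (1 / n : ℝ) * ∑ j, f j w with hFhdef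
  set Gf : EuclideanSpace ℝ (Fin d) → ℝ :=
    fun w => (1 / n : ℝ) * ∑ j ∈ Finset.univ.erase i, f j w with hGfdef
  have hn0 : (0 : ℝ) < n := by
    have := i.pos
    exact_mod_cast this
  have hρ0 : 0 ≤ ρ := le_trans (norm_nonneg _) (hgrad i wi)
  have hρτ : ρ / n < τ := by
    have h1 : ρ / τ < n := lt_of_le_of_lt (le_max_left _ _) hn
    rw [div_lt_iff₀ hn0]
    calc ρ < n * τ := by rwa [div_lt_iff₀ hτ] at h1
    _ = τ * n := mul_comm _ _
  have hβγ : β₁ / n < γ := by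
    have h1 : β₁ / γ < n := lt_of_le_of_lt (le_max_right _ _) hn
    rw [div_lt_iff₀ hn0]
    calc β₁ < n * γ := by rwa [div_lt_iff₀ hγ] at h1
    _ = γ * n := mul_comm _ _
  have hGf2 : ContDiff ℝ 2 Gf := by
    rw [hGfdef]
    exact contDiff_const.mul (ContDiff.sum fun j _ => hsmooth j)
  have hfun : Fh = fun w => Gf w + (1 / n : ℝ) * f i w := by
    funext w
    rw [hFhdef, hGfdef]
    simp only
    rw [← Finset.sum_erase_add _ _ (Finset.mem_univ i)]
    ring
  have hfid : ∀ w, HasFDerivAt (f i) (fderiv ℝ (f i) w) w := fun w =>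
    ((hsmooth i).differentiable (by norm_num) w).hasFDerivAt
  have hkey : ∀ w, HasFDerivAt Fh
      (fderiv ℝ Gf w + (1 / n : ℝ) • fderiv ℝ (f i) w) w := by
    intro w
    rw [hfun]
    exact ((hGf2.differentiable (by norm_num) w).hasFDerivAt).add ((hfid w).const_mul _)
  have hGmin : IsLocalMin Gf wi := Filter.Eventually.of_forall fun w => hmin w
  have hGfd : fderiv ℝ Gf wi = 0 := hGmin.fderiv_eq_zero
  have hfdwi : fderiv ℝ Fh wi = (1 / n : ℝ) • fderiv ℝ (f i) wi := by
    rw [(hkey wi).fderiv, hGfd, zero_add]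
  have hfinorm : ‖fderiv ℝ (f i) wi‖ ≤ ρ := by
    rw [← norm_gradient_eq]
    exact hgrad i wi
  rcases hcases wi with h1 | h2 | h3
  · -- gradient case: contradiction
    exfalso
    have hg : ‖gradient Fh wi‖ = ‖fderiv ℝ Fh wi‖ := norm_gradient_eq Fh wi
    rw [hg, hfdwi, norm_smul, Real.norm_eq_abs, abs_of_pos (by positivity : (0:ℝ) < 1 / n)]
      at h1
    have : (1 / n : ℝ) * ‖fderiv ℝ (f i) wi‖ ≤ 1 / n * ρ :=
      mul_le_mul_of_nonneg_left hfinorm (by positivity)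
    have hlt : (1 / n : ℝ) * ρ = ρ / n := by ring
    linarith
  · -- negative curvature case: contradiction via second-order condition at wi
    exfalso
    obtain ⟨v, hv1, hvneg⟩ := h2
    have hsecond : 0 ≤ iteratedFDeriv ℝ 2 Gf wi ![v, v] := by
      have hline1 := fun t => hasDerivAt_line Gf hGf2 wi v t
      have hline2 := hasDerivAt_line2 Gf hGf2 wi v 0
      have h00 : wi + (0:ℝ) • v = wi := by simp
      rw [h00] at hline2
      refine deriv2_nonneg_of_isLocalMin hline1 hline2 ?_
      refine Filter.Eventually.of_forall fun t => ?_
      show Gf (wi + (0:ℝ) • v) ≤ Gf (wi + t • v)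
      rw [h00]
      exact hmin _
    have hGsmul : ContDiff ℝ 2 ((1 / n : ℝ) • f i) := by
      exact (hsmooth i).const_smul ((1:ℝ) / n)
    have hsplit : iteratedFDeriv ℝ 2 Fh wi ![v, v] =
        iteratedFDeriv ℝ 2 Gf wi ![v, v] + (1 / n : ℝ) * iteratedFDeriv ℝ 2 (f i) wi ![v, v] := by
      have h1 : Fh = Gf + (1 / n : ℝ) • f i := by
        funext w
        rw [hfun]
        simp [smul_eq_mul]
      rw [h1, iteratedFDeriv_add_apply hGf2.contDiffAt hGsmul.contDiffAt,
        iteratedFDeriv_const_smul_apply (hsmooth i).contDiffAt]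
      simp [smul_eq_mul]
    have hB := hhess i wi v
    rw [hv1] at hB
    simp only [one_pow, mul_one] at hB
    have hBlow : -β₁ ≤ iteratedFDeriv ℝ 2 (f i) wi ![v, v] := (abs_le.mp hB).1
    have hm : (1 / n : ℝ) * (-β₁) ≤ (1 / n : ℝ) * iteratedFDeriv ℝ 2 (f i) wi ![v, v] :=
      mul_le_mul_of_nonneg_left hBlow (by positivity)
    have heq : (1 / n : ℝ) * (-β₁) = -(β₁ / n) := by ring
    rw [hsplit] at hvneg
    linarith
  · -- strong convexity case
    obtain ⟨ν, hν0, wstar, hwsmin, hdist, hconv⟩ := h3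
    refine ⟨wstar, fun w => hglob wstar hwsmin w, ?_⟩
    set u : EuclideanSpace ℝ (Fin d) := wi - wstar with hudef
    have hws_fd : fderiv ℝ Fh wstar = 0 := hwsmin.fderiv_eq_zero
    have hline : ∀ t, HasDerivAt (fun s : ℝ => fderiv ℝ Fh (wstar + s • u) u)
        (iteratedFDeriv ℝ 2 Fh (wstar + t • u) ![u, u]) t :=
      fun t => hasDerivAt_line2 Fh hF2 wstar u t
    obtain ⟨c, hc, hceq⟩ := exists_hasDerivAt_eq_slope
      (fun s : ℝ => fderiv ℝ Fh (wstar + s • u) u)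
      (fun t => iteratedFDeriv ℝ 2 Fh (wstar + t • u) ![u, u]) one_pos
      (fun x _ => (hline x).continuousAt.continuousWithinAt) (fun x _ => hline x)
    have h10 : wstar + u = wi := by
      rw [hudef]; abel
    have h00 : wstar + (0:ℝ) • u = wstar := by simp
    have hval : iteratedFDeriv ℝ 2 Fh (wstar + c • u) ![u, u] = fderiv ℝ Fh wi u := by
      rw [hceq]
      simp [h10, h00, hws_fd]
    -- upper bound
    have hupper : fderiv ℝ Fh wi u ≤ ρ / n * ‖u‖ := by
      rw [hfdwi]
      have h1 : fderiv ℝ (f i) wi u ≤ ρ * ‖u‖ := by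
        calc fderiv ℝ (f i) wi u ≤ ‖fderiv ℝ (f i) wi u‖ := Real.le_norm_self _
        _ ≤ ‖fderiv ℝ (f i) wi‖ * ‖u‖ := (fderiv ℝ (f i) wi).le_opNorm u
        _ ≤ ρ * ‖u‖ := mul_le_mul_of_nonneg_right hfinorm (norm_nonneg u)
      calc ((1 / n : ℝ) • fderiv ℝ (f i) wi) u = (1 / n : ℝ) * fderiv ℝ (f i) wi u := rfl
      _ ≤ (1 / n : ℝ) * (ρ * ‖u‖) := mul_le_mul_of_nonneg_left h1 (by positivity)
      _ = ρ / n * ‖u‖ := by ring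
    -- lower bound from strong convexity
    have hmem : wstar + c • u ∈ Metric.closedBall wstar (2 * ν) := by
      rw [Metric.mem_closedBall, dist_eq_norm, add_sub_cancel_left, norm_smul,
        Real.norm_eq_abs, abs_of_pos hc.1]
      have h1 : ‖u‖ ≤ ν := hdist
      nlinarith [hc.2, norm_nonneg u]
    have hlow : α * ‖u‖ ^ 2 ≤ iteratedFDeriv ℝ 2 Fh (wstar + c • u) ![u, u] := hconv _ hmem u
    have hkey2 : α * ‖u‖ ^ 2 ≤ ρ / n * ‖u‖ := by
      rw [hval] at hlow
      linarith
    have hfd : f i wi - f i wstar ≤ ρ * ‖u‖ := by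
      calc f i wi - f i wstar ≤ |f i wi - f i wstar| := le_abs_self _
      _ ≤ ρ * ‖wi - wstar‖ := hlip i wi wstar
      _ = ρ * ‖u‖ := by rw [hudef]
    rcases eq_or_lt_of_le (norm_nonneg u) with h0 | h0
    · rw [← h0] at hfd
      have : f i wi - f i wstar ≤ 0 := by linarith
      have hpos : (0:ℝ) ≤ 2 * ρ ^ 2 / (α * n) := by positivity
      linarith
    · have hu1 : α * ‖u‖ * ‖u‖ ≤ (ρ / n) * ‖u‖ := by nlinarith [hkey2]
      have hu2 : α * ‖u‖ ≤ ρ / n := le_of_mul_le_mul_right hu1 h0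
      have hu3 : α * ‖u‖ * n ≤ ρ := by
        have := mul_le_mul_of_nonneg_right hu2 hn0.le
        rwa [div_mul_cancel₀ _ hn0.ne'] at this
      have hfinal : ρ * ‖u‖ ≤ 2 * ρ ^ 2 / (α * n) := by
        rw [le_div_iff₀ (by positivity : (0:ℝ) < α * n)]
        nlinarith [mul_le_mul_of_nonneg_left hu3 hρ0, sq_nonneg ρ]
      linarith
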